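/- Let ρ and τ be contraction vectors for ℝ^d that are equivalent, i.e. joined by a finite chain ρ = ρ⁽¹⁾, ρ⁽²⁾, …, ρ⁽ᴺ⁾ = τ of contraction vectors in which, for each 1 ≤ j < N, either ρ⁽ʲ⁺¹⁾ is derived from ρ⁽ʲ⁾ or ρ⁽ʲ⁾ is derived from ρ⁽ʲ⁺¹⁾. Then every E ∈ D(ρ) and every F ∈ D(τ) are Lipschitz equivalent. -/

import Mathlib

open Set Metric MeasureTheory

noncomputable section

/-- Two subsets of a metric space are Lipschitz equivalent if there is a
bi-Lipschitz bijection between them. -/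
def LipschitzEquivalent {X : Type*} [MetricSpace X] (E F : Set X) : Prop :=
  ∃ (f : X → X) (C : ℝ), 0 < C ∧ Set.BijOn f E F ∧
    ∀ x ∈ E, ∀ y ∈ E,
      C⁻¹ * dist x y ≤ dist (f x) (f y) ∧ dist (f x) (f y) ≤ C * dist x y

/-- `φ` is a similarity with ratio `r`. -/
def IsSimilarity {X : Type*} [MetricSpace X] (r : ℝ) (φ : X → X) : Prop :=
  ∀ x y, dist (φ x) (φ y) = r * dist x y

/-- `ρ = (ρ₁, …, ρ_m)` is a contraction vector for `ℝ^d`. -/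
def IsContractionVector (d m : ℕ) (ρ : Fin m → ℝ) : Prop :=
  (∀ j, ρ j ∈ Set.Ioo (0:ℝ) 1) ∧ ∑ j, ρ j ^ d < 1

/-- `E` is a dust-like self-similar set with contraction vector `ρ`,
i.e. `E ∈ D(ρ)`. -/
def IsDustLike {X : Type*} [MetricSpace X] {m : ℕ} (ρ : Fin m → ℝ) (E : Set X) : Prop :=
  E.Nonempty ∧ IsCompact E ∧
  ∃ φ : Fin m → X → X,
    (∀ j, IsSimilarity (ρ j) (φ j)) ∧
    E = ⋃ j, φ j '' E ∧
    Pairwise fun j k => Disjoint (φ j '' E) (φ k '' E)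
/-- The symbol cylinder `[i] ⊆ Σ_m` of all infinite sequences beginning with
the finite word `i`. -/
def symbCyl {m : ℕ} (i : List (Fin m)) : Set (ℕ → Fin m) :=
  {w | ∀ t : Fin i.length, w t = i.get t}

/-- `b` is derived from `a`: there is a cut set `{j₁, …, j_n}` of `Σ_m`
(nonempty words whose symbol cylinders are pairwise disjoint and tile `Σ_m`)
such that `b = (a_{j₁}, …, a_{j_n})`. -/
def DerivedFrom (a b : Σ k : ℕ, Fin k → ℝ) : Prop :=
  ∃ j : Fin b.1 → List (Fin a.1),
    (∀ r, j r ≠ []) ∧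
    (Pairwise fun r r' => Disjoint (symbCyl (j r)) (symbCyl (j r'))) ∧
    (⋃ r, symbCyl (j r)) = Set.univ ∧
    ∀ r, b.2 r = ((j r).map a.2).prod

/-- Two contraction vectors for `ℝ^d` are equivalent if they are joined by a
finite chain of contraction vectors in which each consecutive pair is related
by derivation (in one direction or the other). -/
def CVEquiv (d : ℕ) (a b : Σ k : ℕ, Fin k → ℝ) : Prop :=
  Relation.ReflTransGen
    (fun u v => IsContractionVector d u.1 u.2 ∧ IsContractionVector d v.1 v.2 ∧
      (DerivedFrom u v ∨ DerivedFrom v u)) a b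


noncomputable section
namespace CVP

variable {m : ℕ}

lemma exists_diff {w w' : ℕ → Fin m} (h : w ≠ w') : ∃ k, w k ≠ w' k :=
  Function.ne_iff.mp h

/-- index of first difference -/
noncomputable def fd (w w' : ℕ → Fin m) (h : w ≠ w') : ℕ := Nat.find (exists_diff h)

lemma fd_spec {w w' : ℕ → Fin m} (h : w ≠ w') : w (fd w w' h) ≠ w' (fd w w' h) :=
  Nat.find_spec (exists_diff h)

lemma fd_lt {w w' : ℕ → Fin m} (h : w ≠ w') {t : ℕ} (ht : t < fd w w' h) : w t = w' t :=
  not_not.mp (Nat.find_min (exists_diff h) ht)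

lemma fd_eq {w w' : ℕ → Fin m} (h : w ≠ w') {k : ℕ}
    (h1 : ∀ t < k, w t = w' t) (h2 : w k ≠ w' k) : fd w w' h = k := by
  rcases lt_trichotomy (fd w w' h) k with hlt | he | hgt
  · exact absurd (h1 _ hlt) (fd_spec h)
  · exact he
  · exact absurd (fd_lt h hgt) h2

lemma fd_symm {w w' : ℕ → Fin m} (h : w ≠ w') : fd w' w h.symm = fd w w' h :=
  fd_eq h.symm (fun t ht => (fd_lt h ht).symm) (fd_spec h).symm

open Classical in
/-- symbolic quasi-distance attached to a vector of ratios -/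
noncomputable def qd (σ : Fin m → ℝ) (w w' : ℕ → Fin m) : ℝ :=
  if h : w = w' then 0 else ∏ t ∈ Finset.range (fd w w' h), σ (w t)

lemma qd_self (σ : Fin m → ℝ) (w : ℕ → Fin m) : qd σ w w = 0 := by unfold qd; rw [dif_pos rfl]

lemma qd_of_ne (σ : Fin m → ℝ) {w w' : ℕ → Fin m} (h : w ≠ w') :
    qd σ w w' = ∏ t ∈ Finset.range (fd w w' h), σ (w t) := by unfold qd; rw [dif_neg h]

lemma qd_pos {σ : Fin m → ℝ} (hσ : ∀ j, 0 < σ j) {w w' : ℕ → Fin m} (h : w ≠ w') :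
    0 < qd σ w w' := by
  rw [qd_of_ne σ h]
  exact Finset.prod_pos fun t _ => hσ _

lemma qd_nonneg {σ : Fin m → ℝ} (hσ : ∀ j, 0 < σ j) (w w' : ℕ → Fin m) :
    0 ≤ qd σ w w' := by
  by_cases h : w = w'
  · simp [h, qd_self]
  · exact (qd_pos hσ h).le

lemma qd_symm (σ : Fin m → ℝ) (w w' : ℕ → Fin m) : qd σ w' w = qd σ w w' := by
  by_cases h : w = w'
  · simp [h]
  · rw [qd_of_ne σ h, qd_of_ne σ (Ne.symm h), fd_symm (Ne.symm (Ne.symm h))]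
    exact Finset.prod_congr rfl fun t ht => by
      rw [fd_lt h (Finset.mem_range.mp ht)]

/-- the word given by the first `k` letters of `w` -/
def wordOf (w : ℕ → Fin m) (k : ℕ) : List (Fin m) := List.ofFn fun i : Fin k => w i

@[simp] lemma wordOf_length (w : ℕ → Fin m) (k : ℕ) : (wordOf w k).length = k := by
  simp [wordOf]

lemma wordOf_succ (w : ℕ → Fin m) (k : ℕ) :
    wordOf w (k + 1) = wordOf w k ++ [w k] := by
  rw [wordOf, List.ofFn_succ']
  simp [wordOf, List.concat_eq_append, Fin.coe_castSucc, Fin.val_last]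

lemma wordOf_map_prod (σ : Fin m → ℝ) (w : ℕ → Fin m) (k : ℕ) :
    ((wordOf w k).map σ).prod = ∏ t ∈ Finset.range k, σ (w t) := by
  rw [wordOf, List.map_ofFn, List.prod_ofFn]
  exact (Finset.prod_range fun t => σ (w t)).symm

variable {X : Type*} [MetricSpace X]

/-- composition of the maps along a word -/
def wcomp (φ : Fin m → X → X) : List (Fin m) → X → X
  | [] => id
  | a :: l => φ a ∘ wcomp φ l

@[simp] lemma wcomp_nil (φ : Fin m → X → X) : wcomp φ [] = id := rfl

lemma wcomp_append (φ : Fin m → X → X) (l l' : List (Fin m)) :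
    wcomp φ (l ++ l') = wcomp φ l ∘ wcomp φ l' := by
  induction l with
  | nil => rfl
  | cons a l ih => simp [wcomp, ih, Function.comp_assoc]

lemma wcomp_similarity {σ : Fin m → ℝ} {φ : Fin m → X → X}
    (hφ : ∀ j, IsSimilarity (σ j) (φ j)) (l : List (Fin m)) :
    IsSimilarity ((l.map σ).prod) (wcomp φ l) := by
  induction l with
  | nil => intro x y; simp [wcomp]
  | cons a l ih =>
    intro x y
    simp only [wcomp, Function.comp_apply, List.map_cons, List.prod_cons]
    rw [hφ a, ih, mul_assoc]

end CVP
namespace CVP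
variable {m : ℕ} {X : Type*} [MetricSpace X]

lemma sim_continuous {r : ℝ} {f : X → X} (hr : 0 ≤ r) (hf : IsSimilarity r f) :
    Continuous f := by
  rw [Metric.continuous_iff]
  intro b ε hε
  refine ⟨ε / (r + 1), by positivity, fun a ha => ?_⟩
  rw [hf]
  calc r * dist a b ≤ r * (ε / (r+1)) := by
        exact mul_le_mul_of_nonneg_left ha.le hr
    _ < (r + 1) * (ε / (r+1)) := by
        apply mul_lt_mul_of_pos_right (by linarith) (by positivity)
    _ = ε := by field_simp

variable [CompleteSpace X]

lemma coding {σ : Fin m → ℝ} (hσ : ∀ j, σ j ∈ Set.Ioo (0:ℝ) 1)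
    {E : Set X} (hE : IsDustLike σ E) :
    ∃ (π : (ℕ → Fin m) → X) (c C : ℝ), 0 < c ∧ 0 < C ∧
      (∀ x ∈ E, ∃ w, π w = x) ∧ (∀ w, π w ∈ E) ∧
      ∀ w w', c * qd σ w w' ≤ dist (π w) (π w') ∧ dist (π w) (π w') ≤ C * qd σ w w' := by
  obtain ⟨hne, hcomp, φ, hφ, hiter, hdisj⟩ := hE
  obtain ⟨e, he⟩ := hne
  -- m is positive
  have hm : Nonempty (Fin m) := by
    rcases Nat.eq_zero_or_pos m with h0 | h1
    · exfalso; subst h0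
      rw [hiter] at he
      simpa using he
    · exact ⟨⟨0, h1⟩⟩
  have hσ0 : ∀ j, 0 < σ j := fun j => (hσ j).1
  -- upper bound for the ratios
  set r : ℝ := Finset.univ.sup' (Finset.univ_nonempty) σ with hr_def
  have hrle : ∀ j, σ j ≤ r := fun j => Finset.le_sup' σ (Finset.mem_univ j)
  have hr0 : 0 < r := lt_of_lt_of_le (hσ0 hm.some) (hrle hm.some)
  have hr1 : r < 1 := by
    rw [hr_def, Finset.sup'_lt_iff]
    exact fun j _ => (hσ j).2
  -- basic facts about the pieces
  have hsub : ∀ j, φ j '' E ⊆ E := by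
    intro j
    have h := Set.subset_iUnion (fun j => φ j '' E) j
    rw [← hiter] at h
    exact h
  have hWsub : ∀ l : List (Fin m), wcomp φ l '' E ⊆ E := by
    intro l
    induction l with
    | nil => simp
    | cons a l ih =>
      intro x hx
      obtain ⟨y, hy, rfl⟩ := hx
      exact hsub a ⟨wcomp φ l y, ih ⟨y, hy, rfl⟩, rfl⟩
  have hsim : ∀ l : List (Fin m), IsSimilarity ((l.map σ).prod) (wcomp φ l) :=
    wcomp_similarity hφ
  have hprodpos : ∀ l : List (Fin m), 0 < (l.map σ).prod := by
    intro l
    apply List.prod_pos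
    intro a ha
    obtain ⟨j, _, rfl⟩ := List.mem_map.mp ha
    exact hσ0 j
  have hcont : ∀ l : List (Fin m), Continuous (wcomp φ l) :=
    fun l => sim_continuous (hprodpos l).le (hsim l)
  have hWcomp : ∀ l : List (Fin m), IsCompact (wcomp φ l '' E) :=
    fun l => hcomp.image (hcont l)
  have hprodle : ∀ (w : ℕ → Fin m) (k : ℕ),
      ((wordOf w k).map σ).prod ≤ r ^ k := by
    intro w k
    rw [wordOf_map_prod]
    induction k with
    | zero => simp
    | succ k ih =>
      rw [Finset.prod_range_succ, pow_succ]
      exact mul_le_mul ih (hrle _) (hσ0 _).le (pow_nonneg hr0.le _)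
  have hdiamim : ∀ (l : List (Fin m)),
      Metric.diam (wcomp φ l '' E) ≤ (l.map σ).prod * Metric.diam E := by
    intro l
    apply Metric.diam_le_of_forall_dist_le
      (mul_nonneg (hprodpos l).le Metric.diam_nonneg)
    rintro x ⟨a, ha, rfl⟩ y ⟨b, hb, rfl⟩
    rw [hsim l]
    exact mul_le_mul_of_nonneg_left
      (Metric.dist_le_diam_of_mem hcomp.isBounded ha hb) (hprodpos l).le
  -- the approximating sequence
  set seq : (ℕ → Fin m) → ℕ → X := fun w k => wcomp φ (wordOf w k) e with hseq_def
  have hseqmem : ∀ w k, seq w k ∈ wcomp φ (wordOf w k) '' E :=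
    fun w k => ⟨e, he, rfl⟩
  have hwordadd : ∀ (w : ℕ → Fin m) (k j : ℕ),
      wordOf w (k + j) = wordOf w k ++ List.ofFn (fun i : Fin j => w (k + i)) := by
    intro w k j
    induction j with
    | zero => simp [wordOf]
    | succ j ih =>
      rw [← Nat.add_assoc, wordOf_succ, ih, List.ofFn_succ']
      simp [List.concat_eq_append, List.append_assoc]
  have hseq_in : ∀ (w : ℕ → Fin m) (k n : ℕ), k ≤ n →
      seq w n ∈ wcomp φ (wordOf w k) '' E := by
    intro w k n hkn
    obtain ⟨j, rfl⟩ := Nat.exists_eq_add_of_le hkn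
    rw [hseq_def]
    simp only
    rw [hwordadd w k j, wcomp_append]
    exact ⟨wcomp φ (List.ofFn fun i : Fin j => w (k + i)) e, hWsub _ ⟨e, he, rfl⟩, rfl⟩
  -- Cauchy and limit
  have hdist_succ : ∀ (w : ℕ → Fin m) (k : ℕ),
      dist (seq w k) (seq w (k + 1)) ≤ Metric.diam E * r ^ k := by
    intro w k
    rw [hseq_def]
    simp only
    rw [wordOf_succ, wcomp_append]
    simp only [Function.comp_apply]
    have h2 : wcomp φ [w k] (e) = φ (w k) e := rfl
    rw [h2, hsim (wordOf w k)]
    calc ((wordOf w k).map σ).prod * dist e (φ (w k) e)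
        ≤ r ^ k * Metric.diam E := by
          apply mul_le_mul (hprodle w k)
            (Metric.dist_le_diam_of_mem hcomp.isBounded he (hsub _ ⟨e, he, rfl⟩))
            dist_nonneg (pow_nonneg hr0.le k)
      _ = Metric.diam E * r ^ k := mul_comm _ _
  have hcauchy : ∀ w, CauchySeq (seq w) := by
    intro w
    exact cauchySeq_of_le_geometric r (Metric.diam E) hr1 (hdist_succ w)
  have hlim : ∀ w : ℕ → Fin m, ∃ x, Filter.Tendsto (seq w) Filter.atTop (nhds x) :=
    fun w => cauchySeq_tendsto_of_complete (hcauchy w)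
  set π : (ℕ → Fin m) → X := fun w => (hlim w).choose with hπ_def
  have hπ : ∀ w, Filter.Tendsto (seq w) Filter.atTop (nhds (π w)) :=
    fun w => (hlim w).choose_spec
  -- the limit point lies in every cylinder
  have key : ∀ (w : ℕ → Fin m) (k : ℕ), π w ∈ wcomp φ (wordOf w k) '' E := by
    intro w k
    apply (hWcomp (wordOf w k)).isClosed.mem_of_tendsto (hπ w)
    filter_upwards [Filter.eventually_ge_atTop k] with n hn
    exact hseq_in w k n hn
  have hπE : ∀ w, π w ∈ E := by
    intro w
    have := key w 0
    simpa [wordOf] using this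
  -- the gap constant
  have pairgap : ∀ p : Fin m × Fin m, ∃ δ : ℝ, 0 < δ ∧
      (p.1 ≠ p.2 → ∀ x ∈ φ p.1 '' E, ∀ y ∈ φ p.2 '' E, δ ≤ dist x y) := by
    rintro ⟨a, b⟩
    by_cases hab : a = b
    · exact ⟨1, one_pos, fun h => absurd hab h⟩
    · have hKa : IsCompact (φ a '' E) := hcomp.image (sim_continuous (hσ0 a).le (hφ a))
      have hKb : IsCompact (φ b '' E) := hcomp.image (sim_continuous (hσ0 b).le (hφ b))
      obtain ⟨δ, hδ0, hδ⟩ := EMetric.exists_pos_forall_lt_edist hKa hKb.isClosed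
        (hdisj hab)
      refine ⟨δ, hδ0, fun _ x hx y hy => ?_⟩
      have := hδ x hx y hy
      rw [edist_dist] at this
      exact le_of_lt ((ENNReal.lt_ofReal_iff_toReal_lt (by simp)).mp this)
  choose g hg0 hg using pairgap
  set δ : ℝ := Finset.univ.inf' (Finset.univ_nonempty) g with hδ_def
  have hδ0 : 0 < δ := by
    rw [hδ_def, Finset.lt_inf'_iff]
    exact fun p _ => hg0 p
  have hδle : ∀ a b : Fin m, a ≠ b → ∀ x ∈ φ a '' E, ∀ y ∈ φ b '' E, δ ≤ dist x y := by
    intro a b hab x hx y hy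
    exact le_trans (Finset.inf'_le g (Finset.mem_univ (a, b))) (hg (a,b) hab x hx y hy)
  -- key membership at level fd + 1
  have key' : ∀ (w : ℕ → Fin m) (k : ℕ),
      π w ∈ wcomp φ (wordOf w k) '' (φ (w k) '' E) := by
    intro w k
    have := key w (k+1)
    rw [wordOf_succ, wcomp_append, Set.image_comp] at this
    exact this
  refine ⟨π, δ, Metric.diam E + 1, hδ0, by positivity, ?_, hπE, ?_⟩
  · -- surjectivity
    intro x hx
    have step : ∀ y : {z // z ∈ E}, ∃ q : Fin m × {z // z ∈ E}, φ q.1 q.2 = (y : X) := by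
      rintro ⟨y, hy⟩
      rw [hiter] at hy
      obtain ⟨j, ⟨z, hz, hzy⟩⟩ := Set.mem_iUnion.mp hy
      exact ⟨⟨j, ⟨z, hz⟩⟩, hzy⟩
    choose nxt hnxt using step
    obtain ⟨p, hp0, hpS⟩ : ∃ p : ℕ → {z // z ∈ E}, p 0 = ⟨x, hx⟩ ∧
        ∀ k, p (k+1) = (nxt (p k)).2 :=
      ⟨fun k => Nat.rec ⟨x, hx⟩ (fun _ y => (nxt y).2) k, rfl, fun k => rfl⟩
    set w : ℕ → Fin m := fun k => (nxt (p k)).1 with hw_def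
    have hp_succ : ∀ k, φ (w k) ((p (k+1) : X)) = (p k : X) := by
      intro k
      rw [hpS k, hw_def]
      exact hnxt (p k)
    have hinv : ∀ k, wcomp φ (wordOf w k) (p k) = x := by
      intro k
      induction k with
      | zero => rw [hp0]; simp [wordOf]
      | succ k ih =>
        rw [wordOf_succ, wcomp_append]
        show wcomp φ (wordOf w k) (wcomp φ [w k] (p (k+1))) = x
        have h3 : wcomp φ [w k] ((p (k+1)) : X) = φ (w k) (p (k+1)) := rfl
        rw [h3, hp_succ k, ih]
    have hxin : ∀ k, x ∈ wcomp φ (wordOf w k) '' E :=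
      fun k => ⟨p k, (p k).2, hinv k⟩
    refine ⟨w, ?_⟩
    have hdistk : ∀ k, dist (π w) x ≤ r ^ k * Metric.diam E := by
      intro k
      calc dist (π w) x ≤ Metric.diam (wcomp φ (wordOf w k) '' E) :=
            Metric.dist_le_diam_of_mem (hWcomp _).isBounded (key w k) (hxin k)
        _ ≤ ((wordOf w k).map σ).prod * Metric.diam E := hdiamim _
        _ ≤ r ^ k * Metric.diam E :=
            mul_le_mul_of_nonneg_right (hprodle w k) Metric.diam_nonneg
    have htend : Filter.Tendsto (fun k => r ^ k * Metric.diam E) Filter.atTop (nhds 0) := by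
      rw [show (0:ℝ) = 0 * Metric.diam E by ring]
      exact (tendsto_pow_atTop_nhds_zero_of_lt_one hr0.le hr1).mul_const _
    have : dist (π w) x ≤ 0 :=
      ge_of_tendsto htend (Filter.Eventually.of_forall hdistk)
    rw [← dist_le_zero]
    exact this
  · -- bi-Lipschitz estimates
    intro w w'
    by_cases hww : w = w'
    · subst hww
      simp [qd_self]
    · set k := fd w w' hww with hk_def
      have hword_eq : wordOf w k = wordOf w' k := by
        apply List.ext_getElem (by simp)
        intro i h1 h2
        simp only [wordOf, List.getElem_ofFn]
        exact fd_lt hww (by simpa [wordOf] using h1)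
      have hq : qd σ w w' = ((wordOf w k).map σ).prod := by
        rw [qd_of_ne σ hww, wordOf_map_prod]
      constructor
      · -- lower bound
        obtain ⟨a, ha, hap⟩ := key' w k
        obtain ⟨b, hb, hbp⟩ := key' w' k
        rw [← hap, ← hbp, ← hword_eq, hsim (wordOf w k), hq]
        rw [mul_comm δ _]
        apply mul_le_mul_of_nonneg_left _ (hprodpos _).le
        exact hδle (w k) (w' k) (fd_spec hww) a ha b hb
      · -- upper bound
        have h1 : dist (π w) (π w') ≤ Metric.diam (wcomp φ (wordOf w k) '' E) := by
          apply Metric.dist_le_diam_of_mem (hWcomp _).isBounded (key w k)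
          rw [hword_eq]; exact key w' k
        calc dist (π w) (π w') ≤ ((wordOf w k).map σ).prod * Metric.diam E :=
              h1.trans (hdiamim _)
          _ ≤ (Metric.diam E + 1) * qd σ w w' := by
              rw [hq, mul_comm]
              apply mul_le_mul_of_nonneg_right (by linarith [Metric.diam_nonneg (s := E)])
                (hprodpos _).le
end CVP
namespace CVP

/-- symbolic bi-Lipschitz equivalence of two ratio vectors -/
def SymbEquiv (a b : Σ k : ℕ, Fin k → ℝ) : Prop :=
  ∃ (h : (ℕ → Fin a.1) → (ℕ → Fin b.1)) (C : ℝ), 0 < C ∧ Function.Bijective h ∧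
    ∀ w w', C⁻¹ * qd a.2 w w' ≤ qd b.2 (h w) (h w') ∧
      qd b.2 (h w) (h w') ≤ C * qd a.2 w w'

lemma symbEquiv_refl (a : Σ k : ℕ, Fin k → ℝ) : SymbEquiv a a :=
  ⟨id, 1, one_pos, Function.bijective_id, fun w w' => by simp⟩

lemma symbEquiv_symm {a b : Σ k : ℕ, Fin k → ℝ} (h : SymbEquiv a b) : SymbEquiv b a := by
  obtain ⟨h, C, hC, hbij, hb⟩ := h
  refine ⟨(Equiv.ofBijective h hbij).symm, C, hC, (Equiv.ofBijective h hbij).symm.bijective, ?_⟩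
  intro u u'
  have e1 : h ((Equiv.ofBijective h hbij).symm u) = u := by
    exact (Equiv.ofBijective h hbij).apply_symm_apply u
  have e2 : h ((Equiv.ofBijective h hbij).symm u') = u' := by
    exact (Equiv.ofBijective h hbij).apply_symm_apply u'
  obtain ⟨h1, h2⟩ := hb ((Equiv.ofBijective h hbij).symm u) ((Equiv.ofBijective h hbij).symm u')
  rw [e1, e2] at h1 h2
  constructor
  · calc C⁻¹ * qd b.2 u u'
        ≤ C⁻¹ * (C * qd a.2 ((Equiv.ofBijective h hbij).symm u) ((Equiv.ofBijective h hbij).symm u')) :=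
          mul_le_mul_of_nonneg_left h2 (inv_nonneg.mpr hC.le)
      _ = qd a.2 ((Equiv.ofBijective h hbij).symm u) ((Equiv.ofBijective h hbij).symm u') := by
          field_simp
  · calc qd a.2 ((Equiv.ofBijective h hbij).symm u) ((Equiv.ofBijective h hbij).symm u')
        = C * (C⁻¹ * qd a.2 ((Equiv.ofBijective h hbij).symm u) ((Equiv.ofBijective h hbij).symm u')) := by
          field_simp
      _ ≤ C * qd b.2 u u' := mul_le_mul_of_nonneg_left h1 hC.le

lemma symbEquiv_trans {a b c : Σ k : ℕ, Fin k → ℝ} (h1 : SymbEquiv a b)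
    (h2 : SymbEquiv b c) : SymbEquiv a c := by
  obtain ⟨f, C, hC, hf, hfb⟩ := h1
  obtain ⟨g, D, hD, hg, hgb⟩ := h2
  refine ⟨g ∘ f, C * D, by positivity, hg.comp hf, ?_⟩
  intro w w'
  obtain ⟨p1, p2⟩ := hfb w w'
  obtain ⟨q1, q2⟩ := hgb (f w) (f w')
  constructor
  · calc (C * D)⁻¹ * qd a.2 w w' = D⁻¹ * (C⁻¹ * qd a.2 w w') := by
          rw [mul_inv]; ring
      _ ≤ D⁻¹ * qd b.2 (f w) (f w') := mul_le_mul_of_nonneg_left p1 (inv_nonneg.mpr hD.le)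
      _ ≤ qd c.2 (g (f w)) (g (f w')) := by
          have := mul_le_mul_of_nonneg_left q1 (by positivity : (0:ℝ) ≤ D)
          calc D⁻¹ * qd b.2 (f w) (f w')
              = D⁻¹ * (D * (D⁻¹ * qd b.2 (f w) (f w'))) := by field_simp
            _ ≤ D⁻¹ * (D * qd c.2 (g (f w)) (g (f w'))) := by
                apply mul_le_mul_of_nonneg_left _ (inv_nonneg.mpr hD.le)
                exact mul_le_mul_of_nonneg_left q1 hD.le
            _ = qd c.2 (g (f w)) (g (f w')) := by field_simp
  · calc qd c.2 (g (f w)) (g (f w')) ≤ D * qd b.2 (f w) (f w') := q2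
      _ ≤ D * (C * qd a.2 w w') := mul_le_mul_of_nonneg_left p2 hD.le
      _ = C * D * qd a.2 w w' := by ring

lemma getD_prefix {α : Type*} {l1 l2 : List α} (hp : l1 <+: l2) {n : ℕ}
    (hn : n < l1.length) (d : α) : l1.getD n d = l2.getD n d := by
  rw [List.getD_eq_getElem _ _ hn,
      List.getD_eq_getElem _ _ (lt_of_lt_of_le hn hp.length_le)]
  exact hp.getElem hn

lemma getD_append_right' {α : Type*} (as bs : List α) (s : ℕ) (hs : s < bs.length)
    (d : α) : (as ++ bs).getD (as.length + s) d = bs.getD s d := by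
  rw [List.getD_eq_getElem _ _ (by rw [List.length_append]; omega),
      List.getD_eq_getElem _ _ hs,
      List.getElem_append_right (Nat.le_add_right _ _)]
  simp

lemma listprod_getD {α : Type*} (g : α → ℝ) (l : List α) (d : α) :
    (l.map g).prod = ∏ s ∈ Finset.range l.length, g (l.getD s d) := by
  conv_lhs => rw [← (List.ofFn_getElem : List.ofFn (fun i : Fin l.length => l[(i : ℕ)]) = l)]
  rw [List.map_ofFn, List.prod_ofFn,
      ← Fin.prod_univ_eq_prod_range (fun s => g (l.getD s d)) l.length]
  apply Finset.prod_congr rfl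
  intro i _
  simp [List.getD_eq_getElem _ _ i.isLt]

lemma cyl_exists_diff {A : ℕ} (d₀ : Fin A) {p q : List (Fin A)}
    (hd : Disjoint (symbCyl p) (symbCyl q)) :
    ∃ s, s < p.length ∧ s < q.length ∧ p.getD s d₀ ≠ q.getD s d₀ := by
  by_contra hc
  push_neg at hc
  set v : ℕ → Fin A := fun n => if hn : n < p.length then p.get ⟨n, hn⟩ else
    (if hn' : n < q.length then q.get ⟨n, hn'⟩ else d₀) with hv
  have hvp : v ∈ symbCyl p := by
    intro t
    rw [hv]; simp only
    rw [dif_pos t.isLt]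
  have hvq : v ∈ symbCyl q := by
    intro t
    rw [hv]; simp only
    by_cases htp : (t : ℕ) < p.length
    · rw [dif_pos htp]
      have h3 := hc t htp t.isLt
      rw [List.getD_eq_getElem _ _ htp, List.getD_eq_getElem _ _ t.isLt] at h3
      simpa using h3
    · rw [dif_neg htp, dif_pos t.isLt]
  exact Set.disjoint_left.mp hd hvp hvq

section derive

variable {A B : ℕ} (j : Fin B → List (Fin A))

/-- concatenation of the words along the first `k` letters -/
def cw (w : ℕ → Fin B) (k : ℕ) : List (Fin A) :=
  (List.ofFn fun i : Fin k => j (w i)).flatten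

lemma cw_zero (w : ℕ → Fin B) : cw j w 0 = [] := by simp [cw]

lemma cw_succ (w : ℕ → Fin B) (k : ℕ) :
    cw j w (k + 1) = cw j w k ++ j (w k) := by
  rw [cw, List.ofFn_succ', List.concat_eq_append, List.flatten_append]
  simp [cw]

lemma cw_congr {w w' : ℕ → Fin B} {k : ℕ} (h : ∀ t < k, w t = w' t) :
    cw j w k = cw j w' k := by
  unfold cw
  congr 1
  have : (fun i : Fin k => j (w i)) = fun i : Fin k => j (w' i) :=
    funext fun i => by rw [h i i.isLt]
  rw [this]

lemma cw_prefix (w : ℕ → Fin B) {k k' : ℕ} (hk : k ≤ k') :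
    cw j w k <+: cw j w k' := by
  induction k' with
  | zero =>
    rw [Nat.le_zero.mp hk]
  | succ k' ih =>
    rcases Nat.lt_or_ge k (k' + 1) with hc | hc
    · exact (ih (Nat.lt_succ_iff.mp hc)).trans (by rw [cw_succ]; exact List.prefix_append _ _)
    · rw [Nat.le_antisymm hk hc]

lemma cw_len_ge (hne : ∀ r, j r ≠ []) (w : ℕ → Fin B) (k : ℕ) :
    k ≤ (cw j w k).length := by
  induction k with
  | zero => simp
  | succ k ih =>
    rw [cw_succ, List.length_append]
    have : 0 < (j (w k)).length := List.length_pos_iff.mpr (hne (w k))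
    omega

/-- the concatenation map on sequence spaces -/
def cmap (d₀ : Fin A) (w : ℕ → Fin B) (n : ℕ) : Fin A :=
  (cw j w (n + 1)).getD n d₀

lemma cmap_eq (hne : ∀ r, j r ≠ []) (d₀ : Fin A) (w : ℕ → Fin B) {k n : ℕ}
    (hn : n < (cw j w k).length) : cmap j d₀ w n = (cw j w k).getD n d₀ := by
  have hn1 : n < (cw j w (n + 1)).length :=
    lt_of_lt_of_le (Nat.lt_succ_self n) (cw_len_ge j hne w (n + 1))
  unfold cmap
  rcases le_total (n + 1) k with hc | hc
  · exact getD_prefix (cw_prefix j w hc) hn1 d₀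
  · exact (getD_prefix (cw_prefix j w hc) hn d₀).symm

end derive

end CVP
namespace CVP

lemma symbEquiv_derived {a b : Σ k : ℕ, Fin k → ℝ} (ha : ∀ i, a.2 i ∈ Set.Ioo (0:ℝ) 1)
    (hder : DerivedFrom a b) : SymbEquiv b a := by
  obtain ⟨j, hne, hdisj, hcov, hval⟩ := hder
  by_cases hb0 : b.1 = 0
  · -- degenerate case: both sequence spaces are empty
    have hSb : IsEmpty (ℕ → Fin b.1) := ⟨fun w => Fin.elim0 (Fin.cast hb0 (w 0))⟩
    have hSa : IsEmpty (ℕ → Fin a.1) := by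
      constructor
      intro u
      have hu : u ∈ (Set.univ : Set (ℕ → Fin a.1)) := Set.mem_univ u
      rw [← hcov] at hu
      obtain ⟨r, -⟩ := Set.mem_iUnion.mp hu
      exact Fin.elim0 (Fin.cast hb0 r)
    exact ⟨fun w => (hSb.false w).elim, 1, one_pos,
      ⟨fun w => (hSb.false w).elim, fun u => (hSa.false u).elim⟩,
      fun w => (hSb.false w).elim⟩
  · have hb1 : 0 < b.1 := Nat.pos_of_ne_zero hb0
    have hBne : Nonempty (Fin b.1) := ⟨⟨0, hb1⟩⟩
    obtain ⟨d₀, l₀, hl₀⟩ := List.exists_cons_of_ne_nil (hne ⟨0, hb1⟩)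
    have hAne : Nonempty (Fin a.1) := ⟨d₀⟩
    have ha0 : ∀ i, 0 < a.2 i := fun i => (ha i).1
    have ha1 : ∀ i, a.2 i < 1 := fun i => (ha i).2
    have hb_pos : ∀ r, 0 < b.2 r := by
      intro r; rw [hval r]; apply List.prod_pos; intro x hx
      obtain ⟨i, _, rfl⟩ := List.mem_map.mp hx; exact ha0 i
    -- the constants
    set μ : ℝ := Finset.univ.inf' Finset.univ_nonempty a.2 with hμ_def
    have hμle : ∀ i, μ ≤ a.2 i := fun i => Finset.inf'_le a.2 (Finset.mem_univ i)
    have hμ0 : 0 < μ := by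
      rw [hμ_def, Finset.lt_inf'_iff]
      exact fun i _ => ha0 i
    have hμ1 : μ ≤ 1 := (hμle d₀).trans (ha1 d₀).le
    set M : ℕ := Finset.univ.sup' Finset.univ_nonempty (fun r => (j r).length) with hM_def
    have hMle : ∀ r, (j r).length ≤ M :=
      fun r => Finset.le_sup' (fun r => (j r).length) (Finset.mem_univ r)
    -- the quasi-distance computation along concatenations
    have hprod_cw : ∀ (w : ℕ → Fin b.1) (k : ℕ),
        ∏ s ∈ Finset.range (cw j w k).length, a.2 (cmap j d₀ w s) =
          ∏ t ∈ Finset.range k, b.2 (w t) := by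
      intro w k
      induction k with
      | zero => simp [cw_zero]
      | succ k ih =>
        rw [cw_succ, List.length_append, Finset.prod_range_add, ih,
          Finset.prod_range_succ]
        congr 1
        have hterm : ∀ s ∈ Finset.range (j (w k)).length,
            a.2 (cmap j d₀ w ((cw j w k).length + s)) = a.2 ((j (w k)).getD s d₀) := by
          intro s hs
          rw [Finset.mem_range] at hs
          rw [cmap_eq j hne d₀ w (k := k + 1)
            (by rw [cw_succ, List.length_append]; omega)]
          rw [cw_succ, getD_append_right' _ _ _ hs]
        rw [Finset.prod_congr rfl hterm, ← listprod_getD a.2 (j (w k)) d₀, hval]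
    -- the estimates for distinct sequences
    have main : ∀ (w w' : ℕ → Fin b.1) (hww : w ≠ w'),
        cmap j d₀ w ≠ cmap j d₀ w' ∧
        ∃ S : ℝ, μ ^ M ≤ S ∧ S ≤ 1 ∧
          qd a.2 (cmap j d₀ w) (cmap j d₀ w') = qd b.2 w w' * S := by
      intro w w' hww
      set k := fd w w' hww with hk_def
      have hJ : cw j w' k = cw j w k :=
        cw_congr j (fun t ht => (fd_lt hww ht).symm)
      -- difference of the two next words
      have hdisj2 : Disjoint (symbCyl (j (w k))) (symbCyl (j (w' k))) :=
        hdisj (fun h => fd_spec hww (congrArg (w ·) rfl ▸ h))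
      obtain ⟨s₀, hs₀⟩ := cyl_exists_diff d₀ hdisj2
      set P : ℕ → Prop := fun s => s < (j (w k)).length ∧ s < (j (w' k)).length ∧
        (j (w k)).getD s d₀ ≠ (j (w' k)).getD s d₀ with hP_def
      have hPex : ∃ s, P s := ⟨s₀, hs₀⟩
      classical
      set t₀ := Nat.find hPex with ht₀_def
      have hPt₀ : P t₀ := Nat.find_spec hPex
      have hPmin : ∀ s < t₀, ¬ P s := fun s hs => Nat.find_min hPex hs
      -- values of the concatenation below the splitting point
      have hvalw : ∀ s < (j (w k)).length,
          cmap j d₀ w ((cw j w k).length + s) = (j (w k)).getD s d₀ := by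
        intro s hs
        rw [cmap_eq j hne d₀ w (k := k + 1)
          (by rw [cw_succ, List.length_append]; omega)]
        rw [cw_succ, getD_append_right' _ _ _ hs]
      have hvalw' : ∀ s < (j (w' k)).length,
          cmap j d₀ w' ((cw j w k).length + s) = (j (w' k)).getD s d₀ := by
        intro s hs
        rw [cmap_eq j hne d₀ w' (k := k + 1)
          (by rw [cw_succ, List.length_append, hJ]; omega)]
        rw [cw_succ, hJ, getD_append_right' _ _ _ hs]
      -- agreement below |J| + t₀ and difference at it
      have hagree : ∀ s < (cw j w k).length + t₀, cmap j d₀ w s = cmap j d₀ w' s := by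
        intro s hs
        rcases Nat.lt_or_ge s (cw j w k).length with hc | hc
        · rw [cmap_eq j hne d₀ w hc, cmap_eq j hne d₀ w' (hJ ▸ hc), hJ]
        · obtain ⟨t, rfl⟩ := Nat.exists_eq_add_of_le hc
          have htt : t < t₀ := by omega
          have h1 : t < (j (w k)).length := lt_of_lt_of_le htt (Nat.le_of_lt hPt₀.1)
          have h2 : t < (j (w' k)).length := lt_of_lt_of_le htt (Nat.le_of_lt hPt₀.2.1)
          rw [hvalw t h1, hvalw' t h2]
          by_contra hcon
          exact hPmin t htt ⟨h1, h2, hcon⟩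
      have hdiff : cmap j d₀ w ((cw j w k).length + t₀) ≠
          cmap j d₀ w' ((cw j w k).length + t₀) := by
        rw [hvalw t₀ hPt₀.1, hvalw' t₀ hPt₀.2.1]
        exact hPt₀.2.2
      have hmapsne : cmap j d₀ w ≠ cmap j d₀ w' :=
        fun h => hdiff (congrFun h _)
      have hfd : fd (cmap j d₀ w) (cmap j d₀ w') hmapsne = (cw j w k).length + t₀ :=
        fd_eq hmapsne hagree hdiff
      refine ⟨hmapsne, ∏ s ∈ Finset.range t₀, a.2 (cmap j d₀ w ((cw j w k).length + s)),
        ?_, ?_, ?_⟩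
      · -- lower bound on S
        calc μ ^ M ≤ μ ^ t₀ := by
              apply pow_le_pow_of_le_one hμ0.le hμ1
              exact le_trans (Nat.le_of_lt hPt₀.1) (hMle (w k))
          _ = ∏ _s ∈ Finset.range t₀, μ := by rw [Finset.prod_const, Finset.card_range]
          _ ≤ ∏ s ∈ Finset.range t₀, a.2 (cmap j d₀ w ((cw j w k).length + s)) :=
              Finset.prod_le_prod (fun _ _ => hμ0.le) (fun s _ => hμle _)
      · exact Finset.prod_le_one (fun _ _ => (ha0 _).le) (fun _ _ => (ha1 _).le)
      · rw [qd_of_ne _ hmapsne, qd_of_ne _ hww, hfd, Finset.prod_range_add,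
          hprod_cw w k]
    -- assemble the symbolic equivalence
    refine ⟨cmap j d₀, (μ ^ M)⁻¹, by positivity, ⟨?_, ?_⟩, ?_⟩
    · -- injective
      intro w w' heq
      by_contra hww
      exact (main w w' hww).1 heq
    · -- surjective
      intro u
      have hsel : ∀ v : ℕ → Fin a.1, ∃ r : Fin b.1, v ∈ symbCyl (j r) := by
        intro v
        have hv : v ∈ (Set.univ : Set (ℕ → Fin a.1)) := Set.mem_univ v
        rw [← hcov] at hv
        exact Set.mem_iUnion.mp hv
      choose sel hsel using hsel
      obtain ⟨v, hv0, hvS⟩ : ∃ v : ℕ → (ℕ → Fin a.1), v 0 = u ∧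
          ∀ k, v (k + 1) = fun n => v k (n + (j (sel (v k))).length) :=
        ⟨fun k => Nat.rec u (fun _ vk => fun n => vk (n + (j (sel vk)).length)) k,
          rfl, fun k => rfl⟩
      refine ⟨fun k => sel (v k), ?_⟩
      set w : ℕ → Fin b.1 := fun k => sel (v k) with hw_def
      have claim1 : ∀ k n, v k n = u (n + (cw j w k).length) := by
        intro k
        induction k with
        | zero => intro n; rw [hv0, cw_zero]; simp
        | succ k ih =>
          intro n
          rw [hvS k]
          show v k (n + (j (sel (v k))).length) = u (n + (cw j w (k + 1)).length)
          rw [← congrFun hw_def k, ih, cw_succ, List.length_append]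
          exact congrArg u (by omega)
      have claim2 : ∀ k s, s < (cw j w k).length → (cw j w k).getD s d₀ = u s := by
        intro k
        induction k with
        | zero => intro s hs; rw [cw_zero] at hs; simp at hs
        | succ k ih =>
          intro s hs
          rw [cw_succ] at hs ⊢
          rw [List.length_append] at hs
          rcases Nat.lt_or_ge s (cw j w k).length with hc | hc
          · rw [← getD_prefix (List.prefix_append _ _) hc d₀]
            exact ih s hc
          · obtain ⟨t, rfl⟩ := Nat.exists_eq_add_of_le hc
            have ht : t < (j (w k)).length := by omega
            rw [getD_append_right' _ _ _ ht]
            have hcylmem := hsel (v k) ⟨t, ht⟩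
            rw [List.getD_eq_getElem _ _ ht]
            have : (j (sel (v k))).get ⟨t, ht⟩ = v k t := (hcylmem).symm
            rw [show (j (w k))[t] = (j (w k)).get ⟨t, ht⟩ from rfl, this, claim1]
            exact congrArg u (by omega)
      funext n
      have hn : n < (cw j w (n + 1)).length :=
        lt_of_lt_of_le (Nat.lt_succ_self n) (cw_len_ge j hne w (n + 1))
      rw [show cmap j d₀ w n = (cw j w (n+1)).getD n d₀ from rfl]
      exact claim2 (n + 1) n hn
    · -- the bi-Lipschitz estimates
      intro w w'
      by_cases hww : w = w'
      · subst hww; simp [qd_self]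
      · obtain ⟨hmapsne, S, hS1, hS2, hSeq⟩ := main w w' hww
        have hqb : 0 < qd b.2 w w' := qd_pos hb_pos hww
        have hμM : (0:ℝ) < μ ^ M := by positivity
        constructor
        · rw [inv_inv, hSeq, mul_comm (qd b.2 w w') S]
          exact mul_le_mul_of_nonneg_right hS1 hqb.le
        · rw [hSeq]
          calc qd b.2 w w' * S ≤ qd b.2 w w' * 1 :=
                mul_le_mul_of_nonneg_left hS2 hqb.le
            _ = qd b.2 w w' := mul_one _
            _ ≤ (μ ^ M)⁻¹ * qd b.2 w w' := by
                nth_rewrite 1 [show qd b.2 w w' = 1 * qd b.2 w w' from (one_mul _).symm]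
                apply mul_le_mul_of_nonneg_right _ hqb.le
                exact (one_le_inv₀ hμM).mpr (pow_le_one₀ hμ0.le hμ1)
end CVP
theorem equivalent_contraction_vectors_lipschitz_equivalent
    (d m n : ℕ) (hd : 1 ≤ d)
    (ρ : Fin m → ℝ) (τ : Fin n → ℝ)
    (hρ : IsContractionVector d m ρ) (hτ : IsContractionVector d n τ)
    (hequiv : CVEquiv d ⟨m, ρ⟩ ⟨n, τ⟩)
    (E F : Set (EuclideanSpace ℝ (Fin d)))
    (hE : IsDustLike ρ E) (hF : IsDustLike τ F) :
    LipschitzEquivalent E F := by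
  classical
  -- symbolic equivalence along the chain
  have keySE : ∀ (a b : Σ k : ℕ, Fin k → ℝ), CVEquiv d a b → CVP.SymbEquiv a b := by
    intro a b hab
    induction hab with
    | refl => exact CVP.symbEquiv_refl _
    | tail hab hbc ih =>
      obtain ⟨hu, hv, hor⟩ := hbc
      refine CVP.symbEquiv_trans ih ?_
      rcases hor with hder | hder
      · exact CVP.symbEquiv_symm (CVP.symbEquiv_derived hu.1 hder)
      · exact CVP.symbEquiv_derived hv.1 hder
  have hSE : CVP.SymbEquiv ⟨m, ρ⟩ ⟨n, τ⟩ := keySE _ _ hequiv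
  obtain ⟨h, C, hC, hbij, hbd⟩ := hSE
  obtain ⟨πE, cE, CE, hcE, hCE, hsurjE, hmemE, hbdE⟩ := CVP.coding hρ.1 hE
  obtain ⟨πF, cF, CF, hcF, hCF, hsurjF, hmemF, hbdF⟩ := CVP.coding hτ.1 hF
  have hρ0 : ∀ i, 0 < ρ i := fun i => (hρ.1 i).1
  have hτ0 : ∀ i, 0 < τ i := fun i => (hτ.1 i).1
  -- injectivity of the coding maps
  have hinjE : Function.Injective πE := by
    intro w w' hww
    by_contra hne
    have h1 := (hbdE w w').1
    rw [hww, dist_self] at h1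
    nlinarith [CVP.qd_pos hρ0 hne]
  have hinjF : Function.Injective πF := by
    intro w w' hww
    by_contra hne
    have h1 := (hbdF w w').1
    rw [hww, dist_self] at h1
    nlinarith [CVP.qd_pos hτ0 hne]
  -- pick codes for points of E
  have hgex : ∀ x : EuclideanSpace ℝ (Fin d), ∃ w : ℕ → Fin m, x ∈ E → πE w = x := by
    intro x
    by_cases hx : x ∈ E
    · obtain ⟨w, hw⟩ := hsurjE x hx
      exact ⟨w, fun _ => hw⟩
    · obtain ⟨x₀, hx₀⟩ := hE.1
      obtain ⟨w₀, -⟩ := hsurjE x₀ hx₀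
      exact ⟨w₀, fun hc => absurd hc hx⟩
  choose g hg using hgex
  set f : EuclideanSpace ℝ (Fin d) → EuclideanSpace ℝ (Fin d) :=
    fun x => πF (h (g x)) with hf_def
  -- the Lipschitz constant
  set K : ℝ := max (CF * C * cE⁻¹) (CE * C * cF⁻¹) + 1 with hK_def
  have hK0 : 0 < K := by
    rw [hK_def]
    positivity
  refine ⟨f, K, hK0, ⟨?_, ?_, ?_⟩, ?_⟩
  · -- maps E into F
    intro x hx
    exact hmemF _
  · -- injective on E
    intro x hx y hy hxy
    rw [hf_def] at hxy
    simp only at hxy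
    have h1 : h (g x) = h (g y) := hinjF hxy
    have h2 : g x = g y := hbij.1 h1
    rw [← hg x hx, ← hg y hy, h2]
  · -- surjective onto F
    intro y hy
    obtain ⟨w', hw'⟩ := hsurjF y hy
    obtain ⟨w, rfl⟩ := hbij.2 w'
    refine ⟨πE w, hmemE w, ?_⟩
    rw [hf_def]
    simp only
    have : g (πE w) = w := hinjE (hg (πE w) (hmemE w))
    rw [this, hw']
  · -- the bi-Lipschitz estimates
    intro x hx y hy
    set wx := g x with hwx
    set wy := g y with hwy
    have hex : πE wx = x := hg x hx
    have hey : πE wy = y := hg y hy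
    have hE1 : cE * CVP.qd ρ wx wy ≤ dist x y := by
      rw [← hex, ← hey]; exact (hbdE wx wy).1
    have hE2 : dist x y ≤ CE * CVP.qd ρ wx wy := by
      rw [← hex, ← hey]; exact (hbdE wx wy).2
    have hS1 : C⁻¹ * CVP.qd ρ wx wy ≤ CVP.qd τ (h wx) (h wy) := (hbd wx wy).1
    have hS2 : CVP.qd τ (h wx) (h wy) ≤ C * CVP.qd ρ wx wy := (hbd wx wy).2
    have hF1 : cF * CVP.qd τ (h wx) (h wy) ≤ dist (f x) (f y) := (hbdF (h wx) (h wy)).1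
    have hF2 : dist (f x) (f y) ≤ CF * CVP.qd τ (h wx) (h wy) := (hbdF (h wx) (h wy)).2
    have hqρ : 0 ≤ CVP.qd ρ wx wy := CVP.qd_nonneg hρ0 _ _
    have hqτ : 0 ≤ CVP.qd τ (h wx) (h wy) := CVP.qd_nonneg hτ0 _ _
    have hCi : 0 < C⁻¹ := by positivity
    constructor
    · -- lower bound
      have key : (CE * C * cF⁻¹)⁻¹ * dist x y ≤ dist (f x) (f y) := by
        have e1 : (CE * C * cF⁻¹)⁻¹ * dist x y ≤ (CE * C * cF⁻¹)⁻¹ * (CE * CVP.qd ρ wx wy) :=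
          mul_le_mul_of_nonneg_left hE2 (by positivity)
        have e2 : (CE * C * cF⁻¹)⁻¹ * (CE * CVP.qd ρ wx wy) = cF * (C⁻¹ * CVP.qd ρ wx wy) := by
          field_simp
        have e3 : cF * (C⁻¹ * CVP.qd ρ wx wy) ≤ cF * CVP.qd τ (h wx) (h wy) :=
          mul_le_mul_of_nonneg_left hS1 hcF.le
        linarith
      have hKge : CE * C * cF⁻¹ ≤ K := by
        rw [hK_def]
        have := le_max_right (CF * C * cE⁻¹) (CE * C * cF⁻¹)
        linarith
      have : K⁻¹ * dist x y ≤ (CE * C * cF⁻¹)⁻¹ * dist x y := by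
        apply mul_le_mul_of_nonneg_right _ dist_nonneg
        apply inv_anti₀ (by positivity) hKge
      linarith
    · -- upper bound
      have key : dist (f x) (f y) ≤ CF * C * cE⁻¹ * dist x y := by
        have e1 : dist (f x) (f y) ≤ CF * (C * CVP.qd ρ wx wy) :=
          le_trans hF2 (mul_le_mul_of_nonneg_left hS2 hCF.le)
        have e2 : CVP.qd ρ wx wy ≤ cE⁻¹ * dist x y := by
          rw [show CVP.qd ρ wx wy = cE⁻¹ * (cE * CVP.qd ρ wx wy) from by field_simp]
          exact mul_le_mul_of_nonneg_left hE1 (by positivity)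
        calc dist (f x) (f y) ≤ CF * (C * CVP.qd ρ wx wy) := e1
          _ ≤ CF * (C * (cE⁻¹ * dist x y)) := by
              apply mul_le_mul_of_nonneg_left _ hCF.le
              exact mul_le_mul_of_nonneg_left e2 hC.le
          _ = CF * C * cE⁻¹ * dist x y := by ring
      have hKge : CF * C * cE⁻¹ ≤ K := by
        rw [hK_def]
        have := le_max_left (CF * C * cE⁻¹) (CE * C * cF⁻¹)
        linarith
      have h9 : CF * C * cE⁻¹ * dist x y ≤ K * dist x y :=
        mul_le_mul_of_nonneg_right hKge dist_nonneg
      exact le_trans key h9
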